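/- Let a < b be real numbers, λ > 0, and y ∈ [a, b]. Let n = ⌊λ(b - a)/(2π)⌋. Then the set {x ∈ [a,b] : 0.5(sin(λx) + 1)(b - a) + a = y} contains at least n elements. -/

import Mathlib

/-- For `y ∈ [a,b]`, the equation `0.5(sin(λx)+1)(b-a) + a = y` has at least
`⌊λ(b-a)/(2π)⌋` solutions `x` in `[a,b]`. -/
theorem stmt_8 (a b lam : ℝ) (hab : a < b) (hlam : 0 < lam)
    (y : ℝ) (hy : y ∈ Set.Icc a b) :
    (⌊lam * (b - a) / (2 * Real.pi)⌋₊ : ℕ∞) ≤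
      {x ∈ Set.Icc a b | 0.5 * (Real.sin (lam * x) + 1) * (b - a) + a = y}.encard := by
  obtain ⟨hya, hyb⟩ := hy
  have hpi := Real.pi_pos
  have hba : (0:ℝ) < b - a := by linarith
  set n := ⌊lam * (b - a) / (2 * Real.pi)⌋₊ with hn
  set c : ℝ := 2 * (y - a) / (b - a) - 1 with hc
  have hc1 : -1 ≤ c := by
    have : (0:ℝ) ≤ 2 * (y - a) / (b - a) := div_nonneg (by linarith) hba.le
    simp [hc]; linarith
  have hc2 : c ≤ 1 := by
    have : 2 * (y - a) / (b - a) ≤ 2 := by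
      rw [div_le_iff₀ hba]; linarith
    simp [hc]; linarith
  set θ := Real.arcsin c with hθ
  have hsin : Real.sin θ = c := Real.sin_arcsin hc1 hc2
  set m0 : ℤ := ⌈(lam * a - θ) / (2 * Real.pi)⌉ with hm0
  set f : ℕ → ℝ := fun k => (θ + 2 * Real.pi * (m0 + k)) / lam with hf
  have hnle : 2 * Real.pi * n ≤ lam * (b - a) := by
    have h1 : (n:ℝ) ≤ lam * (b - a) / (2 * Real.pi) := by
      apply Nat.floor_le; positivity
    rw [mul_comm]
    calc (n:ℝ) * (2 * Real.pi) ≤ lam * (b - a) / (2 * Real.pi) * (2 * Real.pi) := by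
          apply mul_le_mul_of_nonneg_right h1; positivity
      _ = lam * (b - a) := by field_simp
  have hlb : lam * a ≤ θ + 2 * Real.pi * m0 := by
    have h1 : (lam * a - θ) / (2 * Real.pi) ≤ (m0:ℝ) := Int.le_ceil _
    have h2 : lam * a - θ ≤ (m0:ℝ) * (2 * Real.pi) := by
      rw [← div_le_iff₀ (by positivity)]; exact h1
    linarith
  have hub : ∀ k : ℕ, k < n → θ + 2 * Real.pi * (m0 + k) ≤ lam * b := by
    intro k hk
    have h1 : (m0:ℝ) < (lam * a - θ) / (2 * Real.pi) + 1 := Int.ceil_lt_add_one _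
    have h2 : (m0:ℝ) * (2 * Real.pi) < lam * a - θ + 2 * Real.pi := by
      have := mul_lt_mul_of_pos_right h1 (show (0:ℝ) < 2 * Real.pi by positivity)
      calc (m0:ℝ) * (2 * Real.pi) < ((lam * a - θ) / (2 * Real.pi) + 1) * (2 * Real.pi) := this
        _ = lam * a - θ + 2 * Real.pi := by field_simp
    have hk1 : (k:ℝ) + 1 ≤ n := by exact_mod_cast hk
    have : 2 * Real.pi * ((k:ℝ) + 1) ≤ 2 * Real.pi * n := by
      apply mul_le_mul_of_nonneg_left hk1; positivity
    nlinarith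
  have hmem : ∀ k : ℕ, k < n →
      f k ∈ {x ∈ Set.Icc a b | 0.5 * (Real.sin (lam * x) + 1) * (b - a) + a = y} := by
    intro k hk
    have hfk : lam * f k = θ + 2 * Real.pi * (m0 + k) := by
      rw [hf]; field_simp
    constructor
    · constructor
      · rw [← mul_le_mul_iff_right₀ hlam, hfk]
        have : (0:ℝ) ≤ 2 * Real.pi * k := by positivity
        linarith
      · rw [← mul_le_mul_iff_right₀ hlam, hfk]
        exact hub k hk
    · have hs : Real.sin (lam * f k) = c := by
        rw [hfk]
        have : θ + 2 * Real.pi * (m0 + k) = (θ + (k:ℤ) * (2*Real.pi)) + m0 * (2 * Real.pi) := by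
          push_cast; ring
        rw [this, Real.sin_add_int_mul_two_pi, Real.sin_add_int_mul_two_pi, hsin]
      rw [hs, hc]
      field_simp
      ring
  have hinj : Set.InjOn f {i | i < n} := by
    intro i _ j _ hij
    have : (i:ℝ) = j := by
      rw [hf] at hij
      simp only at hij
      field_simp at hij
      have h3 : (2 * Real.pi) * ((i:ℝ) - j) = 0 := by push_cast at hij; linarith
      rcases mul_eq_zero.mp h3 with h | h
      · linarith
      · linarith
    exact_mod_cast this
  calc (n : ℕ∞) = ({i | i < n} : Set ℕ).encard := (Set.Nat.encard_range n).symm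
    _ = (f '' {i | i < n}).encard := (hinj.encard_image).symm
    _ ≤ _ := Set.encard_le_encard (by rintro x ⟨k, hk, rfl⟩; exact hmem k hk)
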